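/- (Parameter dependence for the Volterra integral equation) Let 0 < α ≤ 1, ψ increasing C¹ on I, 0 ≤ N̄ < 1, Q ≥ 0, r̄ continuous nonnegative with t ↦ r̄(t,t) nondecreasing and r̄(t,σ) ≤ r̄(t,t), and q ∈ C(I,ℝ≥0) with q(t) ≤ Q. Suppose h satisfies |h(t,u,v,μ)−h(t,ū,v̄,μ)| ≤ N̄(|u−ū|+|v−v̄|), |h(t,u,v,μ)−h(t,u,v,μ₀)| ≤ q(t)|μ−μ₀|, and g satisfies |g(t,σ,u)−g(t,σ,v)| ≤ r̄(t,σ)|u−v|. If z₁ solves z(t) = h(t, z(t), (1/Γ(α))∫_a^t ψ'(σ)(ψ(t)−ψ(σ))^{α−1}g(t,σ,z(σ))dσ, μ) and z₂ solves the same equation with μ₀ in place of μ, then |z₁(t)−z₂(t)| ≤ (Q|μ−μ₀|/(1−N̄)) E_α( (N̄/(1−N̄)) r̄(t,t)(ψ(t)−ψ(a))^α ) for all t ∈ I. -/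

import Mathlib

open MeasureTheory Set
open Filter Topology intervalIntegral


lemma gamma_shift_lower {α s : ℝ} (hα0 : 0 < α) (hα1 : α ≤ 1) (hs : 0 < s) :
    s * Real.Gamma s ≤ Real.Gamma (s + α) * (s + α) ^ (1 - α) := by
  rcases eq_or_lt_of_le hα1 with rfl | hα1'
  · simp [Real.Gamma_add_one hs.ne', sub_self, mul_comm]
  have hsα : (0:ℝ) < s + α := by linarith
  have hconv := Real.convexOn_log_Gamma.2 (mem_Ioi.2 hsα)
    (mem_Ioi.2 (by linarith : (0:ℝ) < s + α + 1)) hα0.le (by linarith : (0:ℝ) ≤ 1 - α)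
    (by ring)
  have hcomb : α • (s + α) + (1 - α) • (s + α + 1) = s + 1 := by
    simp only [smul_eq_mul]; ring
  rw [hcomb] at hconv
  simp only [Function.comp_apply, smul_eq_mul] at hconv
  have h1 : Real.Gamma (s + α + 1) = (s + α) * Real.Gamma (s + α) := Real.Gamma_add_one hsα.ne'
  have h2 : Real.Gamma (s + 1) = s * Real.Gamma s := Real.Gamma_add_one hs.ne'
  have hG1 : 0 < Real.Gamma (s + α) := Real.Gamma_pos_of_pos hsα
  rw [h1, h2, Real.log_mul hsα.ne' hG1.ne'] at hconv
  have key : Real.log (s * Real.Gamma s) ≤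
      Real.log (Real.Gamma (s + α)) + (1 - α) * Real.log (s + α) := by nlinarith [hconv]
  calc s * Real.Gamma s = Real.exp (Real.log (s * Real.Gamma s)) := by
        rw [Real.exp_log (by positivity)]
    _ ≤ Real.exp (Real.log (Real.Gamma (s + α)) + (1 - α) * Real.log (s + α)) :=
        Real.exp_le_exp.2 key
    _ = Real.Gamma (s + α) * (s + α) ^ (1 - α) := by
        rw [Real.exp_add, Real.exp_log hG1, Real.rpow_def_of_pos hsα,
          mul_comm (Real.log (s + α))]

lemma ml_summable {α y : ℝ} (hα0 : 0 < α) (hα1 : α ≤ 1) (hy : 0 ≤ y) :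
    Summable (fun k : ℕ => y ^ k / Real.Gamma (α * k + 1)) := by
  rcases eq_or_lt_of_le hy with rfl | hy'
  · apply summable_of_ne_finset_zero (s := {0})
    intro k hk
    simp only [Finset.mem_singleton] at hk
    rw [zero_pow hk, zero_div]
  · apply summable_of_ratio_norm_eventually_le (r := 1/2) (by norm_num)
    have htend : Tendsto (fun k : ℕ => (α * k + 1) ^ α) atTop atTop := by
      apply (tendsto_rpow_atTop hα0).comp
      apply Filter.tendsto_atTop_add_const_right
      exact Tendsto.const_mul_atTop hα0 tendsto_natCast_atTop_atTop
    filter_upwards [htend.eventually_ge_atTop (4 * y)] with k hk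
    set s : ℝ := α * k + 1 with hsdef
    have hs1 : (1:ℝ) ≤ s := by
      have : (0:ℝ) ≤ α * k := by positivity
      simp only [hsdef]; linarith
    have hs : (0:ℝ) < s := by linarith
    have hsα : (0:ℝ) < s + α := by linarith
    have hG : 0 < Real.Gamma s := Real.Gamma_pos_of_pos hs
    have hGα : 0 < Real.Gamma (s + α) := Real.Gamma_pos_of_pos hsα
    have hsp : (0:ℝ) < s ^ α := Real.rpow_pos_of_pos hs _
    have h3 : s ^ α ≤ (s + α) ^ α := Real.rpow_le_rpow hs.le (by linarith) hα0.le
    have h2 : (s + α) ^ (1 - α) ≤ (s + α) / s ^ α := by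
      rw [show (1:ℝ) - α = 1 + (-α) by ring, Real.rpow_add hsα, Real.rpow_one,
        Real.rpow_neg hsα.le, div_eq_mul_inv]
      gcongr
    have key : 2 * y * Real.Gamma s ≤ Real.Gamma (s + α) := by
      have h1 := gamma_shift_lower hα0 hα1 hs
      have e1 : s * Real.Gamma s ≤ Real.Gamma (s + α) * ((s + α) / s ^ α) :=
        h1.trans (mul_le_mul_of_nonneg_left h2 hGα.le)
      have e2 : s * Real.Gamma s * s ^ α ≤ Real.Gamma (s + α) * (s + α) := by
        have := mul_le_mul_of_nonneg_right e1 hsp.le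
        calc s * Real.Gamma s * s ^ α ≤ Real.Gamma (s + α) * ((s + α) / s ^ α) * s ^ α := this
          _ = Real.Gamma (s + α) * (s + α) := by field_simp
      have e4 : s * Real.Gamma s * (4 * y) ≤ s * Real.Gamma s * s ^ α :=
        mul_le_mul_of_nonneg_left hk (by positivity)
      have e5 : (2 * s) * (2 * y * Real.Gamma s) ≤ (2 * s) * Real.Gamma (s + α) := by
        nlinarith [e2, e4, hGα, hs]
      exact le_of_mul_le_mul_left e5 (by linarith)
    have hGk : Real.Gamma (α * (k + 1) + 1) = Real.Gamma (s + α) := by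
      congr 1; simp only [hsdef]; push_cast; ring
    rw [Real.norm_eq_abs, Real.norm_eq_abs, abs_div, abs_div]
    push_cast
    rw [hGk, abs_of_pos hGα, abs_of_pos hG,
      abs_of_pos (pow_pos hy' _), abs_of_pos (pow_pos hy' _), div_le_iff₀ hGα]
    have heq : y ^ (k + 1) = 1 / 2 * (y ^ k / Real.Gamma s) * (2 * y * Real.Gamma s) := by
      field_simp; ring
    calc y ^ (k + 1) = 1 / 2 * (y ^ k / Real.Gamma s) * (2 * y * Real.Gamma s) := heq
      _ ≤ 1 / 2 * (y ^ k / Real.Gamma s) * Real.Gamma (s + α) := by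
          apply mul_le_mul_of_nonneg_left key (by positivity)



lemma beta_integrable {α β L : ℝ} (hα : 0 < α) (hβ : 0 ≤ β) (hL : 0 ≤ L) :
    IntervalIntegrable (fun x => x ^ β * (L - x) ^ (α - 1)) volume 0 L := by
  have hker : IntervalIntegrable (fun x => (L - x) ^ (α - 1)) volume 0 L := by
    have h0 : IntervalIntegrable (fun x : ℝ => x ^ (α - 1)) volume L 0 :=
      intervalIntegrable_rpow' (by linarith)
    simpa using h0.comp_sub_left L
  apply hker.continuousOn_mul
  intro x hx
  rw [uIcc_of_le hL] at hx
  exact ((Real.continuousAt_rpow_const x β (Or.inr hβ)).continuousWithinAt)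

lemma beta_value {α β L : ℝ} (hα : 0 < α) (hβ : 0 ≤ β) (hL : 0 ≤ L) :
    ∫ x in (0:ℝ)..L, x ^ β * (L - x) ^ (α - 1)
      = L ^ (α + β) * (Real.Gamma (β + 1) * Real.Gamma α / Real.Gamma (α + β + 1)) := by
  rcases eq_or_lt_of_le hL with rfl | hL'
  · rw [intervalIntegral.integral_same, Real.zero_rpow (by positivity : α + β ≠ 0), zero_mul]
  have hscaled := Complex.betaIntegral_scaled (β + 1 : ℂ) (α : ℂ) hL'
  have hconv : ∫ x in (0:ℝ)..L, ((x : ℂ) ^ ((β : ℂ) + 1 - 1) * ((L : ℂ) - x) ^ ((α : ℂ) - 1))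
      = ((∫ x in (0:ℝ)..L, x ^ β * (L - x) ^ (α - 1) : ℝ) : ℂ) := by
    rw [← intervalIntegral.integral_ofReal]
    apply intervalIntegral.integral_congr
    intro x hx
    rw [uIcc_of_le hL] at hx
    have h1 : ((x : ℂ)) ^ ((β : ℂ) + 1 - 1) = ((x ^ β : ℝ) : ℂ) := by
      rw [Complex.ofReal_cpow hx.1]
      norm_num
    have h2 : ((L : ℂ) - x) ^ ((α : ℂ) - 1) = (((L - x) ^ (α - 1) : ℝ) : ℂ) := by
      rw [Complex.ofReal_cpow (by linarith [hx.2] : (0:ℝ) ≤ L - x)]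
      push_cast
      ring_nf
    simp only [h1, h2, ← Complex.ofReal_mul]
  have hbeta : Complex.betaIntegral (β + 1) α
      = ((Real.Gamma (β + 1) * Real.Gamma α / Real.Gamma (α + β + 1) : ℝ) : ℂ) := by
    have hne : Complex.Gamma ((β : ℂ) + 1 + α) ≠ 0 := by
      have : ((β : ℂ) + 1 + α) = ((β + 1 + α : ℝ) : ℂ) := by push_cast; ring
      rw [this, Complex.Gamma_ofReal]
      exact_mod_cast (Real.Gamma_pos_of_pos (by linarith)).ne'
    have hmul := Complex.Gamma_mul_Gamma_eq_betaIntegral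
      (show 0 < ((β : ℂ) + 1).re by simp; linarith)
      (show 0 < (α : ℂ).re by simpa using hα)
    have : Complex.betaIntegral (β + 1) α
        = Complex.Gamma (β + 1) * Complex.Gamma α / Complex.Gamma ((β : ℂ) + 1 + α) := by
      rw [eq_div_iff hne]
      linear_combination -hmul
    rw [this]
    have e1 : ((β : ℂ) + 1) = ((β + 1 : ℝ) : ℂ) := by push_cast; ring
    have e2 : ((β : ℂ) + 1 + α) = ((α + β + 1 : ℝ) : ℂ) := by push_cast; ring
    rw [e2, e1, Complex.Gamma_ofReal, Complex.Gamma_ofReal, Complex.Gamma_ofReal]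
    push_cast
    ring
  rw [hconv] at hscaled
  have hpow : ((L : ℂ)) ^ ((β : ℂ) + 1 + α - 1) = ((L ^ (α + β) : ℝ) : ℂ) := by
    rw [Complex.ofReal_cpow hL]
    congr 1
    push_cast
    ring
  rw [hpow, hbeta] at hscaled
  exact_mod_cast hscaled

lemma deriv_nonneg_of_strictMonoOn {ψ : ℝ → ℝ} {a b : ℝ}
    (hmono : StrictMonoOn ψ (Icc a b)) (hC1 : ContDiffOn ℝ 1 ψ (Icc a b))
    {σ : ℝ} (hσ : σ ∈ Ioo a b) : 0 ≤ deriv ψ σ := by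
  have hd : HasDerivAt ψ (deriv ψ σ) σ :=
    ((hC1.contDiffAt (Icc_mem_nhds hσ.1 hσ.2)).differentiableAt one_ne_zero).hasDerivAt
  have hdw : HasDerivWithinAt ψ (deriv ψ σ) (Ioc σ b) σ := hd.hasDerivWithinAt
  rw [hasDerivWithinAt_iff_tendsto_slope] at hdw
  have hne : σ ∉ Ioc σ b := by simp
  rw [diff_singleton_eq_self hne, nhdsWithin_Ioc_eq_nhdsGT hσ.2] at hdw
  refine ge_of_tendsto hdw ?_
  filter_upwards [Ioc_mem_nhdsGT_of_mem ⟨le_refl σ, hσ.2⟩] with y hy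
  rw [slope_def_field]
  apply div_nonneg _ (by linarith [hy.1])
  have h1 : ψ σ ≤ ψ y :=
    (hmono.monotoneOn) ⟨hσ.1.le, hσ.2.le⟩ ⟨hσ.1.le.trans hy.1.le, hy.2⟩ hy.1.le
  linarith

lemma subst_Ioo {ψ : ℝ → ℝ} {a b t : ℝ}
    (hmono : StrictMonoOn ψ (Icc a b)) (hC1 : ContDiffOn ℝ 1 ψ (Icc a b))
    (hat : a < t) (htb : t ≤ b) (F : ℝ → ℝ) :
    ((∫ u in Ioo (ψ a) (ψ t), F u) = ∫ σ in Ioo a t, deriv ψ σ * F (ψ σ)) ∧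
    (IntegrableOn F (Ioo (ψ a) (ψ t)) ↔
      IntegrableOn (fun σ => deriv ψ σ * F (ψ σ)) (Ioo a t)) := by
  have hab : a ≤ b := hat.le.trans htb
  have haI : a ∈ Icc a b := ⟨le_refl a, hab⟩
  have htI : t ∈ Icc a b := ⟨hat.le, htb⟩
  have hsub : Ioo a t ⊆ Icc a b := fun σ hσ => ⟨hσ.1.le, hσ.2.le.trans htb⟩
  have himg : ψ '' Ioo a t = Ioo (ψ a) (ψ t) := by
    apply Subset.antisymm
    · rintro _ ⟨σ, hσ, rfl⟩
      exact ⟨hmono haI (hsub hσ) hσ.1, hmono (hsub hσ) htI hσ.2⟩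
    · exact intermediate_value_Ioo hat.le
        (hC1.continuousOn.mono (Icc_subset_Icc_right htb))
  have hder : ∀ σ ∈ Ioo a t, HasDerivWithinAt ψ (deriv ψ σ) (Ioo a t) σ := fun σ hσ =>
    (((hC1.contDiffAt (Icc_mem_nhds (hσ.1) (hσ.2.trans_le htb))).differentiableAt
      one_ne_zero).hasDerivAt).hasDerivWithinAt
  have hinj : InjOn ψ (Ioo a t) := hmono.injOn.mono hsub
  have hcong : EqOn (fun σ => |deriv ψ σ| • F (ψ σ)) (fun σ => deriv ψ σ * F (ψ σ)) (Ioo a t) := by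
    intro σ hσ
    simp only [smul_eq_mul]
    rw [abs_of_nonneg (deriv_nonneg_of_strictMonoOn hmono hC1 ⟨hσ.1, hσ.2.trans_le htb⟩)]
  constructor
  · rw [← himg, integral_image_eq_integral_abs_deriv_smul measurableSet_Ioo hder hinj]
    exact setIntegral_congr_fun measurableSet_Ioo hcong
  · rw [← himg, integrableOn_image_iff_integrableOn_abs_deriv_smul measurableSet_Ioo hder hinj]
    exact ⟨fun H => (integrableOn_congr_fun hcong measurableSet_Ioo).mp H,
      fun H => (integrableOn_congr_fun hcong measurableSet_Ioo).mpr H⟩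

lemma kernel_main {ψ : ℝ → ℝ} {a b t α β : ℝ} (hα : 0 < α) (hβ : 0 ≤ β)
    (hmono : StrictMonoOn ψ (Icc a b)) (hC1 : ContDiffOn ℝ 1 ψ (Icc a b))
    (hat : a ≤ t) (htb : t ≤ b) :
    IntervalIntegrable (fun σ => deriv ψ σ * ((ψ t - ψ σ) ^ (α - 1) * (ψ σ - ψ a) ^ β))
      volume a t ∧
    ∫ σ in a..t, deriv ψ σ * ((ψ t - ψ σ) ^ (α - 1) * (ψ σ - ψ a) ^ β)
      = (ψ t - ψ a) ^ (α + β) * (Real.Gamma (β + 1) * Real.Gamma α / Real.Gamma (α + β + 1)) := by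
  have hab : a ≤ b := hat.trans htb
  rcases eq_or_lt_of_le hat with rfl | hat'
  · constructor
    · exact IntervalIntegrable.refl
    · rw [intervalIntegral.integral_same, sub_self,
        Real.zero_rpow (by positivity : α + β ≠ 0), zero_mul]
  set p := ψ a with hp
  set q := ψ t with hq
  have hpq : p < q := hmono ⟨le_refl a, hab⟩ ⟨hat'.le, htb⟩ hat'
  set F : ℝ → ℝ := fun u => (q - u) ^ (α - 1) * (u - p) ^ β with hF
  have hfeq : ∀ u, F u = (u - p) ^ β * ((q - p) - (u - p)) ^ (α - 1) := by
    intro u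
    simp only [hF]
    have : (q - p) - (u - p) = q - u := by ring
    rw [this, mul_comm]
  have hintF : IntervalIntegrable F volume p q := by
    have h0 := (beta_integrable hα hβ (by linarith : (0:ℝ) ≤ q - p)).comp_sub_right p
    simp only [zero_add, sub_add_cancel] at h0
    have hfe : (fun u => (u - p) ^ β * ((q - p) - (u - p)) ^ (α - 1)) = F :=
      funext fun u => (hfeq u).symm
    simp only [← hfe]
    exact h0
  have hvalF : ∫ u in p..q, F u
      = (q - p) ^ (α + β) * (Real.Gamma (β + 1) * Real.Gamma α / Real.Gamma (α + β + 1)) := by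
    have h1 : ∫ u in p..q, F u
        = ∫ u in p..q, (u - p) ^ β * ((q - p) - (u - p)) ^ (α - 1) :=
      intervalIntegral.integral_congr fun u _ => hfeq u
    have h2 : (∫ u in p..q, (u - p) ^ β * ((q - p) - (u - p)) ^ (α - 1))
        = ∫ x in (0:ℝ)..(q - p), x ^ β * ((q - p) - x) ^ (α - 1) := by
      have h3 := intervalIntegral.integral_comp_sub_right (a := p) (b := q)
        (fun x => x ^ β * ((q - p) - x) ^ (α - 1)) p
      simpa using h3
    rw [h1, h2]
    exact beta_value hα hβ (by linarith)
  obtain ⟨heq, hiff⟩ := subst_Ioo hmono hC1 hat' htb F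
  constructor
  · rw [intervalIntegrable_iff_integrableOn_Ioo_of_le hat'.le]
    exact hiff.mp ((intervalIntegrable_iff_integrableOn_Ioo_of_le hpq.le).mp hintF)
  · rw [integral_of_le hat'.le, integral_Ioc_eq_integral_Ioo, ← heq,
      ← integral_Ioc_eq_integral_Ioo, ← integral_of_le hpq.le, hvalF]


lemma intInt_smul_continuousOn {E : Type*} [NormedAddCommGroup E] [NormedSpace ℝ E]
    {k : ℝ → ℝ} {G : ℝ → E} {a b : ℝ} (hk : IntervalIntegrable k volume a b)
    (hG : ContinuousOn G (Set.uIcc a b)) :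
    IntervalIntegrable (fun x => k x • G x) volume a b := by
  obtain ⟨C, hC⟩ := isCompact_uIcc.exists_bound_of_continuousOn hG
  rw [intervalIntegrable_iff] at hk ⊢
  apply Integrable.mono' (hk.norm.mul_const C)
  · exact hk.aestronglyMeasurable.smul
      ((hG.mono uIoc_subset_uIcc).aestronglyMeasurable measurableSet_uIoc)
  · filter_upwards [ae_restrict_mem measurableSet_uIoc] with x hx
    rw [norm_smul]
    exact mul_le_mul_of_nonneg_left (hC x (uIoc_subset_uIcc hx)) (norm_nonneg _)

/-- One-parameter Mittag-Leffler function `E_α(z) = ∑ z^k / Γ(αk+1)`. -/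
noncomputable def ML (α z : ℝ) : ℝ := ∑' k : ℕ, z ^ k / Real.Gamma (α * k + 1)

/-- The inner Volterra integral operator. -/
noncomputable def volterraK {n : ℕ} (α : ℝ) (ψ : ℝ → ℝ) (a : ℝ)
    (g : ℝ → ℝ → EuclideanSpace ℝ (Fin n) → EuclideanSpace ℝ (Fin n))
    (z : ℝ → EuclideanSpace ℝ (Fin n)) (t : ℝ) : EuclideanSpace ℝ (Fin n) :=
  (Real.Gamma α)⁻¹ • ∫ σ in a..t, (deriv ψ σ * (ψ t - ψ σ) ^ (α - 1)) • g t σ (z σ)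

theorem volterra_parameter_dependence
    (n : ℕ) (a b α Nbar Q μ μ₀ : ℝ) (ψ : ℝ → ℝ)
    (h : ℝ → EuclideanSpace ℝ (Fin n) → EuclideanSpace ℝ (Fin n) → ℝ → EuclideanSpace ℝ (Fin n))
    (g : ℝ → ℝ → EuclideanSpace ℝ (Fin n) → EuclideanSpace ℝ (Fin n))
    (q : ℝ → ℝ) (rbar : ℝ → ℝ → ℝ)
    (z₁ z₂ : ℝ → EuclideanSpace ℝ (Fin n))
    (hα0 : 0 < α) (hα1 : α ≤ 1) (hab : a ≤ b)
    (hmono : StrictMonoOn ψ (Icc a b)) (hC1ψ : ContDiffOn ℝ 1 ψ (Icc a b))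
    (hN0 : 0 ≤ Nbar) (hN1 : Nbar < 1) (hQ : 0 ≤ Q)
    (hh : Continuous fun p : ℝ × EuclideanSpace ℝ (Fin n) × EuclideanSpace ℝ (Fin n) × ℝ =>
      h p.1 p.2.1 p.2.2.1 p.2.2.2)
    (hg : Continuous fun p : ℝ × ℝ × EuclideanSpace ℝ (Fin n) => g p.1 p.2.1 p.2.2)
    (hq : ContinuousOn q (Icc a b)) (hq0 : ∀ t ∈ Icc a b, 0 ≤ q t)
    (hqQ : ∀ t ∈ Icc a b, q t ≤ Q)
    (hrbar : ContinuousOn (fun p : ℝ × ℝ => rbar p.1 p.2)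
      {p : ℝ × ℝ | a ≤ p.2 ∧ p.2 ≤ p.1 ∧ p.1 ≤ b})
    (hrbar0 : ∀ t σ, a ≤ σ → σ ≤ t → t ≤ b → 0 ≤ rbar t σ)
    (hrdiagmono : MonotoneOn (fun t => rbar t t) (Icc a b))
    (hrdiag : ∀ t σ, a ≤ σ → σ ≤ t → t ≤ b → rbar t σ ≤ rbar t t)
    (hhLip : ∀ t u v u' v' (μ' : ℝ),
      ‖h t u v μ' - h t u' v' μ'‖ ≤ Nbar * (‖u - u'‖ + ‖v - v'‖))
    (hhμ : ∀ t u v, ‖h t u v μ - h t u v μ₀‖ ≤ q t * |μ - μ₀|)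
    (hgLip : ∀ t σ u v, ‖g t σ u - g t σ v‖ ≤ rbar t σ * ‖u - v‖)
    (hz₁ : ContinuousOn z₁ (Icc a b)) (hz₂ : ContinuousOn z₂ (Icc a b))
    (hz₁sol : ∀ t ∈ Icc a b, z₁ t = h t (z₁ t) (volterraK α ψ a g z₁ t) μ)
    (hz₂sol : ∀ t ∈ Icc a b, z₂ t = h t (z₂ t) (volterraK α ψ a g z₂ t) μ₀) :
    ∀ t ∈ Icc a b,
      ‖z₁ t - z₂ t‖ ≤ Q * |μ - μ₀| / (1 - Nbar) *
        ML α (Nbar / (1 - Nbar) * rbar t t * (ψ t - ψ a) ^ α) := by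
  have hN1' : (0:ℝ) < 1 - Nbar := by linarith
  have hGα : 0 < Real.Gamma α := Real.Gamma_pos_of_pos hα0
  set Δ : ℝ := |μ - μ₀| with hΔdef
  have hΔ0 : 0 ≤ Δ := abs_nonneg _
  set c : ℝ := Q * Δ / (1 - Nbar) with hcdef
  have hc0 : 0 ≤ c := by positivity
  set lam : ℝ := Nbar / (1 - Nbar) with hlamdef
  have hlam0 : 0 ≤ lam := by positivity
  set w : ℝ → ℝ := fun t => ‖z₁ t - z₂ t‖ with hwdef
  obtain ⟨M0, hM0⟩ := isCompact_Icc.exists_bound_of_continuousOn (hz₁.sub hz₂)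
  set M : ℝ := max M0 0 with hMdef
  have hM0' : (0:ℝ) ≤ M := le_max_right _ _
  have hM : ∀ t ∈ Icc a b, w t ≤ M := fun t ht => (hM0 t ht).trans (le_max_left _ _)
  have hψ0 : ∀ t ∈ Icc a b, 0 ≤ ψ t - ψ a := fun t ht =>
    sub_nonneg.2 (hmono.monotoneOn ⟨le_refl a, hab⟩ ht ht.1)
  set X : ℝ → ℝ := fun t => lam * rbar t t * (ψ t - ψ a) ^ α with hXdef
  have hR0 : ∀ t ∈ Icc a b, 0 ≤ rbar t t := fun t ht => hrbar0 t t ht.1 le_rfl ht.2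
  have hX0 : ∀ t ∈ Icc a b, 0 ≤ X t := by
    intro t ht
    have h1 := hR0 t ht
    have h2 := Real.rpow_nonneg (hψ0 t ht) α
    have : X t = lam * rbar t t * (ψ t - ψ a) ^ α := rfl
    rw [this]; positivity
  -- Step A + B : basic integral inequality
  have stepAB : ∀ t ∈ Icc a b, ∀ φ : ℝ → ℝ, IntervalIntegrable φ volume a t →
      (∀ σ ∈ Ioo a t,
        deriv ψ σ * (ψ t - ψ σ) ^ (α - 1) * (rbar t σ * w σ) ≤ φ σ) →
      w t ≤ c + lam * ((Real.Gamma α)⁻¹ * ∫ σ in a..t, φ σ) := by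
    intro t ht φ hφint hφbd
    have hat : a ≤ t := ht.1
    have htb : t ≤ b := ht.2
    have hker : IntervalIntegrable (fun σ => deriv ψ σ * (ψ t - ψ σ) ^ (α - 1)) volume a t := by
      have := (kernel_main (β := 0) hα0 le_rfl hmono hC1ψ hat htb).1
      simpa [Real.rpow_zero] using this
    have hGcont : ∀ z : ℝ → EuclideanSpace ℝ (Fin n), ContinuousOn z (Icc a b) →
        ContinuousOn (fun σ => g t σ (z σ)) (Set.uIcc a t) := by
      intro z hz
      rw [uIcc_of_le hat]
      exact hg.comp_continuousOn
        (continuousOn_const.prodMk (continuousOn_id.prodMk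
          (hz.mono (Icc_subset_Icc_right htb))))
    have hint₁ := intInt_smul_continuousOn hker (hGcont z₁ hz₁)
    have hint₂ := intInt_smul_continuousOn hker (hGcont z₂ hz₂)
    have hdiff : volterraK α ψ a g z₁ t - volterraK α ψ a g z₂ t
        = (Real.Gamma α)⁻¹ • ∫ σ in a..t,
            (deriv ψ σ * (ψ t - ψ σ) ^ (α - 1)) • (g t σ (z₁ σ) - g t σ (z₂ σ)) := by
      rw [volterraK, volterraK, ← smul_sub, ← intervalIntegral.integral_sub hint₁ hint₂]
      congr 1
      apply intervalIntegral.integral_congr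
      intro σ _
      simp [smul_sub]
    have haet : ∀ᵐ σ ∂(volume.restrict (Set.uIoc a t)), σ ≠ t := by
      apply ae_restrict_of_ae
      rw [ae_iff]
      convert Real.volume_singleton (a := t) using 2
      ext σ; simp
    have haebd : ∀ᵐ σ ∂(volume.restrict (Set.uIoc a t)),
        ‖(deriv ψ σ * (ψ t - ψ σ) ^ (α - 1)) • (g t σ (z₁ σ) - g t σ (z₂ σ))‖ ≤ φ σ := by
      filter_upwards [ae_restrict_mem measurableSet_uIoc, haet] with σ hσ hσt
      rw [uIoc_of_le hat] at hσ
      have hσIoo : σ ∈ Ioo a t := ⟨hσ.1, lt_of_le_of_ne hσ.2 hσt⟩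
      have hσI : σ ∈ Icc a b := ⟨hσIoo.1.le, hσIoo.2.le.trans htb⟩
      have hd0 : 0 ≤ deriv ψ σ :=
        deriv_nonneg_of_strictMonoOn hmono hC1ψ ⟨hσIoo.1, hσIoo.2.trans_le htb⟩
      have hts : 0 ≤ ψ t - ψ σ := sub_nonneg.2 (hmono.monotoneOn hσI ht hσIoo.2.le)
      have hk0 : 0 ≤ deriv ψ σ * (ψ t - ψ σ) ^ (α - 1) :=
        mul_nonneg hd0 (Real.rpow_nonneg hts _)
      calc ‖(deriv ψ σ * (ψ t - ψ σ) ^ (α - 1)) • (g t σ (z₁ σ) - g t σ (z₂ σ))‖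
          = deriv ψ σ * (ψ t - ψ σ) ^ (α - 1) * ‖g t σ (z₁ σ) - g t σ (z₂ σ)‖ := by
            rw [norm_smul, Real.norm_eq_abs, abs_of_nonneg hk0]
        _ ≤ deriv ψ σ * (ψ t - ψ σ) ^ (α - 1) * (rbar t σ * w σ) :=
            mul_le_mul_of_nonneg_left (hgLip t σ _ _) hk0
        _ ≤ φ σ := hφbd σ hσIoo
    have hφge : (0:ℝ) ≤ ∫ σ in a..t, φ σ := by
      rw [integral_of_le hat]
      apply setIntegral_nonneg_of_ae_restrict
      have h0 : ∀ᵐ σ ∂(volume.restrict (Set.uIoc a t)), 0 ≤ φ σ := by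
        filter_upwards [haebd] with σ hσ
        exact (norm_nonneg _).trans hσ
      rw [uIoc_of_le hat] at h0
      exact h0
    have hbound : ‖∫ σ in a..t,
        (deriv ψ σ * (ψ t - ψ σ) ^ (α - 1)) • (g t σ (z₁ σ) - g t σ (z₂ σ))‖
        ≤ ∫ σ in a..t, φ σ := by
      have := intervalIntegral.norm_integral_le_abs_of_norm_le haebd hφint
      rwa [abs_of_nonneg hφge] at this
    have hKb : ‖volterraK α ψ a g z₁ t - volterraK α ψ a g z₂ t‖
        ≤ (Real.Gamma α)⁻¹ * ∫ σ in a..t, φ σ := by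
      rw [hdiff, norm_smul, Real.norm_eq_abs, abs_of_nonneg (inv_nonneg.2 hGα.le)]
      exact mul_le_mul_of_nonneg_left hbound (inv_nonneg.2 hGα.le)
    -- the triangle estimate
    have heq : z₁ t - z₂ t
        = (h t (z₁ t) (volterraK α ψ a g z₁ t) μ - h t (z₂ t) (volterraK α ψ a g z₂ t) μ)
          + (h t (z₂ t) (volterraK α ψ a g z₂ t) μ
              - h t (z₂ t) (volterraK α ψ a g z₂ t) μ₀) := by
      rw [← hz₁sol t ht, ← hz₂sol t ht]
      abel
    have e1 : w t ≤ Nbar * (w t + ‖volterraK α ψ a g z₁ t - volterraK α ψ a g z₂ t‖)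
        + Q * Δ := by
      have tri : w t ≤ ‖h t (z₁ t) (volterraK α ψ a g z₁ t) μ
            - h t (z₂ t) (volterraK α ψ a g z₂ t) μ‖
          + ‖h t (z₂ t) (volterraK α ψ a g z₂ t) μ
            - h t (z₂ t) (volterraK α ψ a g z₂ t) μ₀‖ := by
        show ‖z₁ t - z₂ t‖ ≤ _
        rw [heq]
        exact norm_add_le _ _
      have l1 := hhLip t (z₁ t) (volterraK α ψ a g z₁ t) (z₂ t) (volterraK α ψ a g z₂ t) μ
      have l2 := hhμ t (z₂ t) (volterraK α ψ a g z₂ t)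
      have l3 : q t * |μ - μ₀| ≤ Q * Δ :=
        mul_le_mul_of_nonneg_right (hqQ t ht) hΔ0
      have hwt : w t = ‖z₁ t - z₂ t‖ := rfl
      rw [hwt]
      calc ‖z₁ t - z₂ t‖ ≤ _ + _ := tri
        _ ≤ Nbar * (‖z₁ t - z₂ t‖ + ‖volterraK α ψ a g z₁ t - volterraK α ψ a g z₂ t‖)
            + Q * Δ := add_le_add l1 (l2.trans l3)
    have e2 : w t ≤ c + lam * ‖volterraK α ψ a g z₁ t - volterraK α ψ a g z₂ t‖ := by
      have hY0 : 0 ≤ ‖volterraK α ψ a g z₁ t - volterraK α ψ a g z₂ t‖ := norm_nonneg _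
      have hrw : c + lam * ‖volterraK α ψ a g z₁ t - volterraK α ψ a g z₂ t‖
          = (Q * Δ + Nbar * ‖volterraK α ψ a g z₁ t - volterraK α ψ a g z₂ t‖) / (1 - Nbar) := by
        rw [hcdef, hlamdef]
        first
        | (field_simp; ring)
        | field_simp
      rw [hrw, le_div_iff₀ hN1']
      nlinarith [e1]
    calc w t ≤ c + lam * ‖volterraK α ψ a g z₁ t - volterraK α ψ a g z₂ t‖ := e2
      _ ≤ c + lam * ((Real.Gamma α)⁻¹ * ∫ σ in a..t, φ σ) := by
          have := mul_le_mul_of_nonneg_left hKb hlam0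
          linarith
  -- the Gronwall induction
  have main : ∀ k : ℕ, ∀ t ∈ Icc a b,
      w t ≤ c * (∑ j ∈ Finset.range k, X t ^ j / Real.Gamma (α * j + 1))
        + M * (X t ^ k / Real.Gamma (α * k + 1)) := by
    intro k
    induction k with
    | zero =>
      intro t ht
      simpa [Real.Gamma_one] using hM t ht
    | succ k IH =>
      intro t ht
      have hat : a ≤ t := ht.1
      have htb : t ≤ b := ht.2
      have hR0' : 0 ≤ rbar t t := hR0 t ht
      set R : ℝ := rbar t t with hRdef
      set D : ℕ → ℝ := fun j => Real.Gamma (α * j + 1) with hDdef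
      have hD0 : ∀ j : ℕ, 0 < D j := by
        intro j
        have : (0:ℝ) < α * j + 1 := by positivity
        exact Real.Gamma_pos_of_pos this
      set φ : ℝ → ℝ := fun σ =>
        (∑ j ∈ Finset.range k, (c * R * (lam * R) ^ j / D j)
            * (deriv ψ σ * ((ψ t - ψ σ) ^ (α - 1) * (ψ σ - ψ a) ^ (α * j))))
          + (M * R * (lam * R) ^ k / D k)
            * (deriv ψ σ * ((ψ t - ψ σ) ^ (α - 1) * (ψ σ - ψ a) ^ (α * k))) with hφdef
      have hkern : ∀ j : ℕ,
          IntervalIntegrable (fun σ => deriv ψ σ *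
            ((ψ t - ψ σ) ^ (α - 1) * (ψ σ - ψ a) ^ (α * (j:ℝ)))) volume a t ∧
          ∫ σ in a..t, deriv ψ σ * ((ψ t - ψ σ) ^ (α - 1) * (ψ σ - ψ a) ^ (α * (j:ℝ)))
            = (ψ t - ψ a) ^ (α + α * (j:ℝ)) *
              (Real.Gamma (α * (j:ℝ) + 1) * Real.Gamma α / Real.Gamma (α + α * (j:ℝ) + 1)) :=
        fun j => kernel_main hα0 (by positivity) hmono hC1ψ hat htb
      have hsumfun : (fun σ => ∑ j ∈ Finset.range k, (c * R * (lam * R) ^ j / D j)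
            * (deriv ψ σ * ((ψ t - ψ σ) ^ (α - 1) * (ψ σ - ψ a) ^ (α * j))))
          = ∑ j ∈ Finset.range k, (fun σ => (c * R * (lam * R) ^ j / D j)
            * (deriv ψ σ * ((ψ t - ψ σ) ^ (α - 1) * (ψ σ - ψ a) ^ (α * j)))) := by
        funext σ
        rw [Finset.sum_apply]
      have hsint : IntervalIntegrable (fun σ => ∑ j ∈ Finset.range k,
          (c * R * (lam * R) ^ j / D j)
            * (deriv ψ σ * ((ψ t - ψ σ) ^ (α - 1) * (ψ σ - ψ a) ^ (α * j)))) volume a t := by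
        rw [hsumfun]
        exact IntervalIntegrable.sum (Finset.range k) (fun j _ => ((hkern j).1.const_mul _))
      have hφint : IntervalIntegrable φ volume a t :=
        hsint.add ((hkern k).1.const_mul _)
      -- pointwise bound on the open interval
      have hφbd : ∀ σ ∈ Ioo a t,
          deriv ψ σ * (ψ t - ψ σ) ^ (α - 1) * (rbar t σ * w σ) ≤ φ σ := by
        intro σ hσ
        have hσI : σ ∈ Icc a b := ⟨hσ.1.le, hσ.2.le.trans htb⟩
        have hd0 : 0 ≤ deriv ψ σ :=
          deriv_nonneg_of_strictMonoOn hmono hC1ψ ⟨hσ.1, hσ.2.trans_le htb⟩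
        have hba : 0 ≤ ψ σ - ψ a := hψ0 σ hσI
        have hts : 0 ≤ ψ t - ψ σ := sub_nonneg.2 (hmono.monotoneOn hσI ht hσ.2.le)
        have hA0 : 0 ≤ deriv ψ σ * (ψ t - ψ σ) ^ (α - 1) :=
          mul_nonneg hd0 (Real.rpow_nonneg hts _)
        have hrb : rbar t σ ≤ R := hrdiag t σ hσ.1.le hσ.2.le htb
        have hw0 : 0 ≤ w σ := norm_nonneg _
        have hXσ : ∀ j : ℕ, X σ ^ j ≤ (lam * R) ^ j * (ψ σ - ψ a) ^ (α * (j:ℝ)) := by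
          intro j
          have hrσ : rbar σ σ ≤ R := hrdiagmono hσI ht hσ.2.le
          have hp0 : 0 ≤ (ψ σ - ψ a) ^ α := Real.rpow_nonneg hba α
          have h1 : X σ ≤ lam * R * (ψ σ - ψ a) ^ α := by
            have hXσeq : X σ = lam * rbar σ σ * (ψ σ - ψ a) ^ α := rfl
            rw [hXσeq]
            exact mul_le_mul_of_nonneg_right
              (mul_le_mul_of_nonneg_left hrσ hlam0) hp0
          have h2 : (lam * R * (ψ σ - ψ a) ^ α) ^ j
              = (lam * R) ^ j * (ψ σ - ψ a) ^ (α * (j:ℝ)) := by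
            rw [mul_pow, ← Real.rpow_natCast ((ψ σ - ψ a) ^ α) j, ← Real.rpow_mul hba]
          rw [← h2]
          exact pow_le_pow_left₀ (hX0 σ hσI) h1 j
        have hb1 : w σ ≤ c * (∑ j ∈ Finset.range k,
              (lam * R) ^ j * (ψ σ - ψ a) ^ (α * (j:ℝ)) / D j)
            + M * ((lam * R) ^ k * (ψ σ - ψ a) ^ (α * (k:ℝ)) / D k) := by
          refine (IH σ hσI).trans (add_le_add ?_ ?_)
          · apply mul_le_mul_of_nonneg_left _ hc0
            apply Finset.sum_le_sum
            intro j _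
            rw [div_eq_mul_inv, div_eq_mul_inv]
            exact mul_le_mul_of_nonneg_right (hXσ j) (inv_nonneg.2 (hD0 j).le)
          · apply mul_le_mul_of_nonneg_left _ hM0'
            rw [div_eq_mul_inv, div_eq_mul_inv]
            exact mul_le_mul_of_nonneg_right (hXσ k) (inv_nonneg.2 (hD0 k).le)
        have key : rbar t σ * w σ ≤ R * (c * (∑ j ∈ Finset.range k,
              (lam * R) ^ j * (ψ σ - ψ a) ^ (α * (j:ℝ)) / D j)
            + M * ((lam * R) ^ k * (ψ σ - ψ a) ^ (α * (k:ℝ)) / D k)) :=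
          (mul_le_mul_of_nonneg_right hrb hw0).trans
            (mul_le_mul_of_nonneg_left hb1 hR0')
        calc deriv ψ σ * (ψ t - ψ σ) ^ (α - 1) * (rbar t σ * w σ)
            ≤ deriv ψ σ * (ψ t - ψ σ) ^ (α - 1) * (R * (c * (∑ j ∈ Finset.range k,
                (lam * R) ^ j * (ψ σ - ψ a) ^ (α * (j:ℝ)) / D j)
              + M * ((lam * R) ^ k * (ψ σ - ψ a) ^ (α * (k:ℝ)) / D k))) :=
              mul_le_mul_of_nonneg_left key hA0
          _ = φ σ := by
              rw [hφdef]
              simp only [mul_add, Finset.mul_sum]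
              congr 1
              · apply Finset.sum_congr rfl
                intro j _
                ring
              · ring
      have hstep := stepAB t ht φ hφint hφbd
      -- compute the integral of φ
      have hval : ∫ σ in a..t, φ σ
          = (∑ j ∈ Finset.range k, (c * R * (lam * R) ^ j / D j)
              * ((ψ t - ψ a) ^ (α + α * (j:ℝ)) *
                (Real.Gamma (α * (j:ℝ) + 1) * Real.Gamma α / Real.Gamma (α + α * (j:ℝ) + 1))))
            + (M * R * (lam * R) ^ k / D k)
              * ((ψ t - ψ a) ^ (α + α * (k:ℝ)) *
                (Real.Gamma (α * (k:ℝ) + 1) * Real.Gamma α / Real.Gamma (α + α * (k:ℝ) + 1))) := by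
        rw [hφdef]
        rw [intervalIntegral.integral_add hsint ((hkern k).1.const_mul _)]
        congr 1
        · rw [intervalIntegral.integral_finset_sum
            (fun j _ => ((hkern j).1.const_mul (c * R * (lam * R) ^ j / D j)))]
          apply Finset.sum_congr rfl
          intro j _
          rw [intervalIntegral.integral_const_mul, (hkern j).2]
        · rw [intervalIntegral.integral_const_mul, (hkern k).2]
      -- collapse the algebra
      have hXt1 : X t = lam * R * (ψ t - ψ a) ^ α := rfl
      have hXtp : ∀ j : ℕ, X t ^ (j + 1)
          = (lam * R) ^ (j + 1) * (ψ t - ψ a) ^ (α + α * (j:ℝ)) := by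
        intro j
        rw [hXt1, mul_pow, ← Real.rpow_natCast ((ψ t - ψ a) ^ α) (j+1),
          ← Real.rpow_mul (hψ0 t ht)]
        congr 1
        push_cast
        ring
      have hDsucc : ∀ j : ℕ, D (j + 1) = Real.Gamma (α + α * (j:ℝ) + 1) := by
        intro j
        simp only [hDdef]
        congr 1
        push_cast
        ring
      have hD0eq : D 0 = 1 := by
        simp only [hDdef]
        norm_num [Real.Gamma_one]
      have hterm : ∀ (e : ℝ) (j : ℕ),
          lam * ((Real.Gamma α)⁻¹ * ((e * R * (lam * R) ^ j / D j)
            * ((ψ t - ψ a) ^ (α + α * (j:ℝ)) *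
              (Real.Gamma (α * (j:ℝ) + 1) * Real.Gamma α / Real.Gamma (α + α * (j:ℝ) + 1)))))
          = e * (X t ^ (j+1) / D (j+1)) := by
        intro e j
        rw [hXtp j, hDsucc j]
        have hDj : D j = Real.Gamma (α * (j:ℝ) + 1) := rfl
        rw [hDj]
        have hG1 : Real.Gamma (α * (j:ℝ) + 1) ≠ 0 :=
          (Real.Gamma_pos_of_pos (by positivity)).ne'
        have hG2 : Real.Gamma (α + α * (j:ℝ) + 1) ≠ 0 :=
          (Real.Gamma_pos_of_pos (by positivity)).ne'
        field_simp
        ring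
      have hcollapse : c + lam * ((Real.Gamma α)⁻¹ * ∫ σ in a..t, φ σ)
          = c * (∑ j ∈ Finset.range (k+1), X t ^ j / D j)
            + M * (X t ^ (k+1) / D (k+1)) := by
        rw [hval, Finset.sum_range_succ']
        rw [mul_add ((Real.Gamma α)⁻¹), mul_add lam, Finset.mul_sum, Finset.mul_sum]
        rw [Finset.sum_congr rfl (fun j _ => hterm c j), hterm M k]
        simp only [pow_zero, hD0eq, div_one]
        rw [mul_add c, Finset.mul_sum]
        ring
      calc w t ≤ c + lam * ((Real.Gamma α)⁻¹ * ∫ σ in a..t, φ σ) := hstep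
        _ = _ := hcollapse
  -- the limit
  intro t ht
  have hy0 : 0 ≤ X t := hX0 t ht
  have hsum : Summable (fun k : ℕ => X t ^ k / Real.Gamma (α * k + 1)) :=
    ml_summable hα0 hα1 hy0
  have hS : Tendsto (fun k => ∑ j ∈ Finset.range k, X t ^ j / Real.Gamma (α * j + 1))
      atTop (𝓝 (ML α (X t))) := hsum.hasSum.tendsto_sum_nat
  have hrem : Tendsto (fun k : ℕ => X t ^ k / Real.Gamma (α * k + 1)) atTop (𝓝 0) :=
    hsum.tendsto_atTop_zero
  have hcomb : Tendsto (fun k : ℕ =>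
      c * (∑ j ∈ Finset.range k, X t ^ j / Real.Gamma (α * j + 1))
        + M * (X t ^ k / Real.Gamma (α * k + 1))) atTop (𝓝 (c * ML α (X t) + M * 0)) :=
    (hS.const_mul c).add (hrem.const_mul M)
  have hfin := ge_of_tendsto' hcomb (fun k => main k t ht)
  rw [mul_zero, add_zero] at hfin
  exact hfin
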